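/- If a finite map M is face-reflexible with half-reflexible subgroup G ≤ Aut(M), then M is face-bipartite: the faces can be 2-colored so that adjacent faces receive different colors, and the two color classes are the two orbits of G on faces. -/

import Mathlib

/-- Two flags lie in the same face iff some element of `⟨r₀, r₁⟩` maps one to the other. -/
def SameFace {Ω : Type} (r0 r1 : Equiv.Perm Ω) (x y : Ω) : Prop :=
  ∃ h ∈ Subgroup.closure ({r0, r1} : Set (Equiv.Perm Ω)), h x = y

/-- A finite map, given by its flag set `Ω` with the three adjacency involutions
`r₀, r₁, r₂`.  If `G` is a half-reflexible subgroup of `Aut(M)` (a group of symmetries,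
i.e. permutations commuting with `r₀, r₁, r₂`, which is not transitive on flags but
whose face stabilizers are transitive on the flags of each face), then `M` is
face-bipartite: there is a 2-coloring of the faces (a `Bool`-coloring of flags
constant on faces) such that adjacent faces (faces across an edge, i.e. across `r₂`)
receive different colors, and the two color classes are the two orbits of `G` on
faces. -/
theorem face_reflexible_implies_face_bipartite {Ω : Type} [Fintype Ω] [Nonempty Ω]
    (r0 r1 r2 : Equiv.Perm Ω)
    (h0 : r0 * r0 = 1) (h1 : r1 * r1 = 1) (h2 : r2 * r2 = 1)
    (h02 : r0 * r2 = r2 * r0)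
    (hconn : ∀ x y : Ω, ∃ g ∈ Subgroup.closure ({r0, r1, r2} : Set (Equiv.Perm Ω)), g x = y)
    (G : Subgroup (Equiv.Perm Ω))
    (hGaut : ∀ g ∈ G, g * r0 = r0 * g ∧ g * r1 = r1 * g ∧ g * r2 = r2 * g)
    (hnotflag : ¬ ∀ x y : Ω, ∃ g ∈ G, g x = y)
    (hhalf : ∀ x y : Ω, SameFace r0 r1 x y → ∃ g ∈ G, g x = y) :
    ∃ c : Ω → Bool,
      (∀ x y : Ω, SameFace r0 r1 x y → c x = c y) ∧
      (∀ x : Ω, c (r2 x) ≠ c x) ∧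
      (∀ x y : Ω, c x = c y ↔ ∃ g ∈ G, SameFace r0 r1 (g x) y) := by
  classical
  -- the G-orbit relation on flags
  let R : Ω → Ω → Prop := fun x y => ∃ g ∈ G, g x = y
  have Rrefl : ∀ x, R x x := fun x => ⟨1, one_mem G, rfl⟩
  have Rsymm : ∀ {x y}, R x y → R y x := by
    rintro x y ⟨g, hg, rfl⟩
    exact ⟨g⁻¹, inv_mem hg, Equiv.symm_apply_apply g x⟩
  have Rtrans : ∀ {x y z}, R x y → R y z → R x z := by
    rintro x y z ⟨g, hg, rfl⟩ ⟨k, hk, rfl⟩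
    exact ⟨k * g, mul_mem hk hg, rfl⟩
  have comm2 : ∀ g ∈ G, ∀ x, g (r2 x) = r2 (g x) := by
    intro g hg x
    have h := (hGaut g hg).2.2
    calc g (r2 x) = (g * r2) x := rfl
      _ = (r2 * g) x := by rw [h]
      _ = r2 (g x) := rfl
  have r2r2 : ∀ x, r2 (r2 x) = x := by
    intro x
    have : (r2 * r2) x = (1 : Equiv.Perm Ω) x := by rw [h2]
    simpa using this
  have Rr2 : ∀ {x y}, R x y → R (r2 x) (r2 y) := by
    rintro x y ⟨g, hg, rfl⟩
    exact ⟨g, hg, comm2 g hg x⟩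
  have R0 : ∀ x, R x (r0 x) :=
    fun x => hhalf x (r0 x) ⟨r0, Subgroup.subset_closure (by simp), rfl⟩
  have R1 : ∀ x, R x (r1 x) :=
    fun x => hhalf x (r1 x) ⟨r1, Subgroup.subset_closure (by simp), rfl⟩
  -- no flag is G-related to its image under r2
  have nofix : ∀ x, ¬ R (r2 x) x := by
    intro a hfix
    apply hnotflag
    have step2 : ∀ z, R z a → R (r2 z) a := fun z h => Rtrans (Rr2 h) hfix
    have key : ∀ g ∈ Subgroup.closure ({r0, r1, r2} : Set (Equiv.Perm Ω)),
        ∀ z, R z a ↔ R (g z) a := by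
      intro g hg
      induction hg using Subgroup.closure_induction with
      | mem s hs =>
        rcases hs with h | h | h
        · rw [h]; exact fun z => ⟨fun h => Rtrans (Rsymm (R0 z)) h, fun h => Rtrans (R0 z) h⟩
        · rw [h]; exact fun z => ⟨fun h => Rtrans (Rsymm (R1 z)) h, fun h => Rtrans (R1 z) h⟩
        · rw [h]
          refine fun z => ⟨step2 z, fun h => ?_⟩
          have := step2 (r2 z) h
          rwa [r2r2] at this
      | one => simp
      | mul x y hx hy ihx ihy =>
        intro z
        have : (x * y) z = x (y z) := rfl
        rw [this]
        exact (ihy z).trans (ihx (y z))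
      | inv x hx ih =>
        intro z
        have := ih (x⁻¹ z)
        rw [show x (x⁻¹ z) = z from Equiv.apply_symm_apply x z] at this
        exact this.symm
    intro x y
    have hx : R x a := by
      obtain ⟨g, hg, hgx⟩ := hconn a x
      have := (key g hg a).mp (Rrefl a)
      rwa [hgx] at this
    have hy : R y a := by
      obtain ⟨g, hg, hgy⟩ := hconn a y
      have := (key g hg a).mp (Rrefl a)
      rwa [hgy] at this
    exact Rtrans hx (Rsymm hy)
  -- base point and the two orbits
  obtain ⟨x₀⟩ := ‹Nonempty Ω›
  let P : Ω → Prop := fun z => R z x₀ ∨ R z (r2 x₀)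
  have swap : ∀ z, P z → P (r2 z) := by
    rintro z (h | h)
    · exact Or.inr (Rr2 h)
    · have := Rr2 h
      rw [r2r2] at this
      exact Or.inl this
  have key2 : ∀ g ∈ Subgroup.closure ({r0, r1, r2} : Set (Equiv.Perm Ω)),
      ∀ z, P z ↔ P (g z) := by
    intro g hg
    induction hg using Subgroup.closure_induction with
    | mem s hs =>
      rcases hs with h | h | h
      · rw [h]
        exact fun z => ⟨fun h => h.imp (Rtrans (Rsymm (R0 z))) (Rtrans (Rsymm (R0 z))),
          fun h => h.imp (Rtrans (R0 z)) (Rtrans (R0 z))⟩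
      · rw [h]
        exact fun z => ⟨fun h => h.imp (Rtrans (Rsymm (R1 z))) (Rtrans (Rsymm (R1 z))),
          fun h => h.imp (Rtrans (R1 z)) (Rtrans (R1 z))⟩
      · rw [h]
        refine fun z => ⟨swap z, fun h => ?_⟩
        have := swap (r2 z) h
        rwa [r2r2] at this
    | one => simp
    | mul x y hx hy ihx ihy =>
      intro z
      have : (x * y) z = x (y z) := rfl
      rw [this]
      exact (ihy z).trans (ihx (y z))
    | inv x hx ih =>
      intro z
      have := ih (x⁻¹ z)
      rw [show x (x⁻¹ z) = z from Equiv.apply_symm_apply x z] at this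
      exact this.symm
  have cover : ∀ x, P x := by
    intro x
    obtain ⟨g, hg, hgx⟩ := hconn x₀ x
    have := (key2 g hg x₀).mp (Or.inl (Rrefl x₀))
    rwa [hgx] at this
  have notboth : ∀ x, R x x₀ → R x (r2 x₀) → False := by
    intro x h1' h2'
    exact nofix x₀ (Rtrans (Rsymm h2') h1')
  -- the coloring
  refine ⟨fun x => decide (R x x₀), ?_, ?_, ?_⟩
  · intro x y hsf
    have hxy : R x y := hhalf x y hsf
    simp only [decide_eq_decide]
    exact ⟨fun h => Rtrans (Rsymm hxy) h, fun h => Rtrans hxy h⟩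
  · intro x h
    rw [decide_eq_decide] at h
    rcases cover x with hx | hx
    · exact nofix x (Rtrans (h.mpr hx) (Rsymm hx))
    · have h2x : R (r2 x) x₀ := by
        have := Rr2 hx
        rwa [r2r2] at this
      exact notboth x (h.mp h2x) hx
  · intro x y
    rw [decide_eq_decide]
    constructor
    · intro h
      have hxy : R x y := by
        rcases cover x with hx | hx
        · exact Rtrans hx (Rsymm (h.mp hx))
        · have hnx : ¬ R x x₀ := fun hh => notboth x hh hx
          have hny : ¬ R y x₀ := fun hh => hnx (h.mpr hh)
          rcases cover y with hy | hy
          · exact absurd hy hny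
          · exact Rtrans hx (Rsymm hy)
      obtain ⟨g, hg, hgx⟩ := hxy
      exact ⟨g, hg, 1, one_mem _, by simpa using hgx⟩
    · rintro ⟨g, hg, hsf⟩
      have h1' : R x (g x) := ⟨g, hg, rfl⟩
      have h2' : R (g x) y := hhalf _ _ hsf
      have hxy : R x y := Rtrans h1' h2'
      exact ⟨fun h => Rtrans (Rsymm hxy) h, fun h => Rtrans hxy h⟩
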